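/- Let 𝒜 be a complex unital Banach algebra, z₀ ∈ ℂ, 0 ≤ ρ' < ρ, and A ∈ 𝒜 with ‖A − z₀·1‖ ≤ ρ'. Let α₁,…,α_k ∈ ℂ and β₁,…,β_k ∈ ℂ with |β_j − z₀| > ρ for every j. Then each A − β_j·1 is invertible and ‖∏_{j=1}^{k} (A − α_j·1)(A − β_j·1)^{-1}‖ ≤ (ρ/(ρ − ρ')) · sup_{|z−z₀| ≤ ρ} ∏_{j=1}^{k} |z − α_j| / |z − β_j|. -/

import Mathlib

set_option linter.unusedSectionVars false


open Metric Finset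

section Aux

variable {𝒜 : Type*} [NormedRing 𝒜] [NormedAlgebra ℂ 𝒜] [CompleteSpace 𝒜] [NormOneClass 𝒜]

lemma sub_algebraMap_sub (A : 𝒜) (z₀ c' : ℂ) :
    A - algebraMap ℂ 𝒜 z₀ - algebraMap ℂ 𝒜 (c' - z₀) = A - algebraMap ℂ 𝒜 c' := by
  rw [map_sub]; abel

lemma resolvent_aux (B : 𝒜) (c : ℂ) (hc : ‖B‖ < ‖c‖) :
    IsUnit (B - algebraMap ℂ 𝒜 c) ∧
      HasSum (fun n => (-(c⁻¹ ^ (n + 1))) • B ^ n)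
        (Ring.inverse (B - algebraMap ℂ 𝒜 c)) := by
  have hc0 : c ≠ 0 := by
    intro h
    rw [h] at hc
    simp only [norm_zero] at hc
    exact (norm_nonneg B).not_gt hc
  have hcpos : 0 < ‖c‖ := lt_of_le_of_lt (norm_nonneg B) hc
  set t : 𝒜 := c⁻¹ • B with ht_def
  have ht : ‖t‖ < 1 := by
    rw [ht_def, norm_smul, norm_inv]
    rw [inv_mul_lt_iff₀ hcpos, mul_one]
    exact hc
  have key : B - algebraMap ℂ 𝒜 c = algebraMap ℂ 𝒜 (-c) * (1 - t) := by
    rw [← Algebra.smul_def, smul_sub, smul_smul, neg_mul, mul_inv_cancel₀ hc0,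
      Algebra.algebraMap_eq_smul_one]
    module
  have hu1 : IsUnit (algebraMap ℂ 𝒜 (-c)) :=
    ((neg_ne_zero.2 hc0).isUnit).map (algebraMap ℂ 𝒜)
  have hu2 : IsUnit ((1 : 𝒜) - t) := isUnit_one_sub_of_norm_lt_one ht
  have hunit : IsUnit (B - algebraMap ℂ 𝒜 c) := by rw [key]; exact hu1.mul hu2
  refine ⟨hunit, ?_⟩
  have hinv : Ring.inverse (B - algebraMap ℂ 𝒜 c)
      = Ring.inverse ((1 : 𝒜) - t) * algebraMap ℂ 𝒜 (-c)⁻¹ := by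
    rw [key, Ring.mul_inverse_rev' (Algebra.commutes (-c) ((1:𝒜) - t))]
    congr 1
    have : algebraMap ℂ 𝒜 (-c) = ((Units.map (algebraMap ℂ 𝒜 : ℂ →+* 𝒜).toMonoidHom
        (Units.mk0 (-c) (neg_ne_zero.2 hc0))) : 𝒜) := rfl
    rw [this, Ring.inverse_unit, ← map_inv]
    rfl
  have hgeo := (hasSum_geom_series_inverse t ht).mul_right (algebraMap ℂ 𝒜 (-c)⁻¹)
  rw [← hinv] at hgeo
  convert hgeo using 2 with n
  · rfl
  rw [ht_def, smul_pow, ← Algebra.commutes, ← Algebra.smul_def, smul_smul]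
  congr 1
  rw [inv_neg, neg_mul, ← pow_succ']

/-- coefficient sequence of the power series of `(z - α)/(z - β)` at `z₀`. -/
noncomputable def coefFn (z₀ α βj : ℂ) : ℕ → ℂ :=
  fun n => (if n = 0 then 1 else 0) - (βj - α) * ((βj - z₀)⁻¹) ^ (n + 1)

lemma factor_hasSum (A : 𝒜) (z₀ α βj : ℂ) (ρ'' : ℝ)
    (hA : ‖A - algebraMap ℂ 𝒜 z₀‖ ≤ ρ'') (hb : ρ'' < ‖βj - z₀‖) :
    HasSum (fun n => coefFn z₀ α βj n • (A - algebraMap ℂ 𝒜 z₀) ^ n)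
      ((A - algebraMap ℂ 𝒜 α) * Ring.inverse (A - algebraMap ℂ 𝒜 βj)) := by
  set B : 𝒜 := A - algebraMap ℂ 𝒜 z₀ with hB
  set c : ℂ := βj - z₀ with hc
  have hnorm : ‖B‖ < ‖c‖ := lt_of_le_of_lt hA hb
  have hre := resolvent_aux B c hnorm
  rw [hB, sub_algebraMap_sub A z₀ βj] at hre
  obtain ⟨hunit, hsum⟩ := hre
  set inv : 𝒜 := Ring.inverse (A - algebraMap ℂ 𝒜 βj) with hinv
  -- sum of the geometric part
  have h1 : HasSum (fun n => ((βj - α) * (-(c⁻¹ ^ (n + 1)))) • B ^ n) ((βj - α) • inv) := by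
    have := hsum.const_smul (βj - α)
    convert this using 2 with n
    rw [smul_smul]
  have h2 : HasSum (fun n => (if n = 0 then (1 : ℂ) else 0) • B ^ n) (1 : 𝒜) := by
    have : (fun n => (if n = 0 then (1 : ℂ) else 0) • B ^ n)
        = fun n => if n = 0 then (1 : 𝒜) else 0 := by
      funext n
      by_cases h : n = 0 <;> simp [h]
    rw [this]
    exact hasSum_ite_eq 0 1
  have h3 := h2.add h1
  have heq : (fun n => coefFn z₀ α βj n • B ^ n)
      = fun n => (if n = 0 then (1 : ℂ) else 0) • B ^ n
          + ((βj - α) * (-(c⁻¹ ^ (n + 1)))) • B ^ n := by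
    funext n
    rw [coefFn, ← add_smul]
    congr 1
    ring
  rw [heq]
  convert h3 using 1
  -- now show (A - α) * inv = 1 + (βj - α) • inv
  have hAα : A - algebraMap ℂ 𝒜 α = (A - algebraMap ℂ 𝒜 βj) + (βj - α) • (1 : 𝒜) := by
    rw [← Algebra.algebraMap_eq_smul_one, map_sub]
    abel
  rw [hAα, add_mul, smul_mul_assoc, one_mul, hinv, Ring.mul_inverse_cancel _ hunit]

lemma coef_summable (z₀ α βj : ℂ) (ρ : ℝ) (h0ρ : 0 ≤ ρ) (hb : ρ < ‖βj - z₀‖) :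
    Summable fun n => ‖coefFn z₀ α βj n‖ * ρ ^ n := by
  set c : ℂ := βj - z₀ with hc
  have hcpos : 0 < ‖c‖ := lt_of_le_of_lt h0ρ hb
  have hratio : ρ * (‖c‖)⁻¹ < 1 := by
    rw [← div_eq_mul_inv, div_lt_one hcpos]; exact hb
  have hratio0 : 0 ≤ ρ * (‖c‖)⁻¹ := by positivity
  have hs1 : Summable fun n : ℕ => (if n = 0 then (1 : ℝ) else 0) :=
    (hasSum_ite_eq 0 (1 : ℝ)).summable
  have hs2 : Summable fun n : ℕ =>
      (‖βj - α‖ * (‖c‖)⁻¹) * (ρ * (‖c‖)⁻¹) ^ n :=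
    (summable_geometric_of_lt_one hratio0 hratio).mul_left _
  apply Summable.of_nonneg_of_le (fun n => by positivity) _ (hs1.add hs2)
  intro n
  have habs : ‖coefFn z₀ α βj n‖
      ≤ (if n = 0 then (1 : ℝ) else 0) + ‖βj - α‖ * (‖c‖)⁻¹ ^ (n + 1) := by
    rw [coefFn, sub_eq_add_neg]
    refine (norm_add_le _ _).trans ?_
    gcongr
    · by_cases h : n = 0 <;> simp [h]
    · rw [norm_neg, norm_mul, norm_pow, norm_inv]
  calc ‖coefFn z₀ α βj n‖ * ρ ^ n
      ≤ ((if n = 0 then (1 : ℝ) else 0) + ‖βj - α‖ * (‖c‖)⁻¹ ^ (n + 1))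
          * ρ ^ n := by
        apply mul_le_mul_of_nonneg_right habs (by positivity)
    _ = (if n = 0 then (1 : ℝ) else 0) * ρ ^ n
          + ‖βj - α‖ * (‖c‖)⁻¹ * (ρ * (‖c‖)⁻¹) ^ n := by
        rw [add_mul]
        congr 1
        rw [pow_succ, mul_pow]
        ring
    _ ≤ (if n = 0 then (1 : ℝ) else 0)
          + ‖βj - α‖ * (‖c‖)⁻¹ * (ρ * (‖c‖)⁻¹) ^ n := by
        refine add_le_add ?_ (le_refl _)
        by_cases h : n = 0 <;> simp [h]

end Aux
lemma pow_norm_le {𝒜 : Type*} [NormedRing 𝒜] [NormOneClass 𝒜] (B : 𝒜) {r : ℝ}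
    (h : ‖B‖ ≤ r) (n : ℕ) : ‖B ^ n‖ ≤ r ^ n := by
  induction n with
  | zero => simp
  | succ n ih =>
      rw [pow_succ, pow_succ]
      exact (norm_mul_le _ _).trans
        (mul_le_mul ih h (norm_nonneg _) (pow_nonneg ((norm_nonneg B).trans h) n))

lemma cauchyProductHasSum {𝒜 : Type*} [NormedRing 𝒜] [CompleteSpace 𝒜] {f g : ℕ → 𝒜} {F G : 𝒜}
    (hf : HasSum f F) (hg : HasSum g G)
    (hf' : Summable fun n => ‖f n‖) (hg' : Summable fun n => ‖g n‖) :
    HasSum (fun n => ∑ kl ∈ Finset.HasAntidiagonal.antidiagonal n, f kl.1 * g kl.2) (F * G) := by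
  have h1 := summable_norm_sum_mul_antidiagonal_of_summable_norm hf' hg'
  have h2 : Summable fun n => ∑ kl ∈ Finset.HasAntidiagonal.antidiagonal n, f kl.1 * g kl.2 := h1.of_norm
  rw [h2.hasSum_iff, ← tsum_mul_tsum_eq_tsum_sum_antidiagonal_of_summable_norm hf' hg',
    hf.tsum_eq, hg.tsum_eq]

lemma main_ind {𝒜 : Type*} [NormedRing 𝒜] [NormedAlgebra ℂ 𝒜] [CompleteSpace 𝒜]
    [NormOneClass 𝒜] (A : 𝒜) (z₀ : ℂ) (ρ ρ' : ℝ) (h0 : 0 ≤ ρ') (hlt : ρ' < ρ)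
    (hA : ‖A - algebraMap ℂ 𝒜 z₀‖ ≤ ρ') :
    ∀ l : List (ℂ × ℂ), (∀ p ∈ l, ρ < ‖p.2 - z₀‖) →
      ∃ a : ℕ → ℂ,
        (Summable fun n => ‖a n‖ * ρ ^ n) ∧
        (∀ w : ℂ, ‖w‖ ≤ ρ →
          HasSum (fun n => a n * w ^ n)
            ((l.map fun p => (z₀ + w - p.1) / (z₀ + w - p.2))).prod) ∧
        HasSum (fun n => a n • (A - algebraMap ℂ 𝒜 z₀) ^ n)
          ((l.map fun p =>
            (A - algebraMap ℂ 𝒜 p.1) * Ring.inverse (A - algebraMap ℂ 𝒜 p.2))).prod := by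
  have hρ : (0 : ℝ) < ρ := lt_of_le_of_lt h0 hlt
  intro l
  induction l with
  | nil =>
      intro _
      refine ⟨fun n => if n = 0 then 1 else 0, ?_, ?_, ?_⟩
      · have : (fun n : ℕ => ‖if n = 0 then (1 : ℂ) else 0‖ * ρ ^ n)
            = fun n : ℕ => if n = 0 then (1 : ℝ) else 0 := by
          funext n; by_cases h : n = 0 <;> simp [h]
        rw [this]
        exact (hasSum_ite_eq 0 (1 : ℝ)).summable
      · intro w _
        have : (fun n : ℕ => (if n = 0 then (1 : ℂ) else 0) * w ^ n)
            = fun n : ℕ => if n = 0 then (1 : ℂ) else 0 := by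
          funext n; by_cases h : n = 0 <;> simp [h]
        rw [this, List.map_nil, List.prod_nil]
        exact hasSum_ite_eq 0 (1 : ℂ)
      · have : (fun n : ℕ => (if n = 0 then (1 : ℂ) else 0) • (A - algebraMap ℂ 𝒜 z₀) ^ n)
            = fun n : ℕ => if n = 0 then (1 : 𝒜) else 0 := by
          funext n; by_cases h : n = 0 <;> simp [h]
        rw [this, List.map_nil, List.prod_nil]
        exact hasSum_ite_eq 0 (1 : 𝒜)
  | cons p l ih =>
      intro hmem
      obtain ⟨a, ha_sum, ha_fun, ha_A⟩ := ih fun q hq => hmem q (List.mem_cons_of_mem p hq)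
      have hp : ρ < ‖p.2 - z₀‖ := hmem p List.mem_cons_self
      set b : ℕ → ℂ := coefFn z₀ p.1 p.2 with hb_def
      have hb_sum : Summable fun n => ‖b n‖ * ρ ^ n :=
        coef_summable z₀ p.1 p.2 ρ hρ.le hp
      refine ⟨fun n => ∑ kl ∈ Finset.HasAntidiagonal.antidiagonal n, b kl.1 * a kl.2, ?_, ?_, ?_⟩
      · -- summability of the Cauchy product coefficients
        have h1 := summable_norm_sum_mul_antidiagonal_of_summable_norm
          (f := fun n => ‖b n‖ * ρ ^ n) (g := fun n => ‖a n‖ * ρ ^ n)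
          (hb_sum.congr fun n => (Real.norm_of_nonneg (by positivity)).symm)
          (ha_sum.congr fun n => (Real.norm_of_nonneg (by positivity)).symm)
        refine Summable.of_nonneg_of_le (fun n => by positivity) (fun n => ?_) h1
        have hterm : ∀ kl ∈ Finset.HasAntidiagonal.antidiagonal n,
            (‖b kl.1‖ * ρ ^ kl.1) * (‖a kl.2‖ * ρ ^ kl.2)
              = ‖b kl.1‖ * ‖a kl.2‖ * ρ ^ n := by
          intro kl hkl
          rw [← Finset.HasAntidiagonal.mem_antidiagonal.1 hkl, pow_add]
          ring
        calc ‖∑ kl ∈ Finset.HasAntidiagonal.antidiagonal n, b kl.1 * a kl.2‖ * ρ ^ n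
            ≤ (∑ kl ∈ Finset.HasAntidiagonal.antidiagonal n, ‖b kl.1‖ * ‖a kl.2‖)
                * ρ ^ n := by
              apply mul_le_mul_of_nonneg_right _ (pow_nonneg hρ.le n)
              refine (norm_sum_le _ _).trans ?_
              refine le_of_eq (Finset.sum_congr rfl fun kl _ => ?_)
              exact norm_mul _ _
          _ = ∑ kl ∈ Finset.HasAntidiagonal.antidiagonal n,
                (‖b kl.1‖ * ρ ^ kl.1) * (‖a kl.2‖ * ρ ^ kl.2) := by
              rw [Finset.sum_mul]
              exact (Finset.sum_congr rfl fun kl hkl => (hterm kl hkl)).symm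
          _ ≤ ‖∑ kl ∈ Finset.HasAntidiagonal.antidiagonal n,
                (‖b kl.1‖ * ρ ^ kl.1) * (‖a kl.2‖ * ρ ^ kl.2)‖ :=
              le_abs_self _
      · -- the scalar statement
        intro w hw
        have hbw : HasSum (fun n => b n * w ^ n)
            ((z₀ + w - p.1) / (z₀ + w - p.2)) := by
          have h1 : ‖(z₀ + w) - algebraMap ℂ ℂ z₀‖ ≤ ρ := by
            simpa using hw
          have := factor_hasSum (𝒜 := ℂ) (z₀ + w) z₀ p.1 p.2 ρ h1 hp
          simpa [Ring.inverse_eq_inv', div_eq_mul_inv, smul_eq_mul, add_sub_cancel_left]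
            using this
        have haw := ha_fun w hw
        have hf' : Summable fun n => ‖b n * w ^ n‖ := by
          refine Summable.of_nonneg_of_le (fun n => norm_nonneg _) (fun n => ?_) hb_sum
          rw [norm_mul, norm_pow]
          exact mul_le_mul_of_nonneg_left (pow_le_pow_left₀ (norm_nonneg w) hw n)
            (norm_nonneg _)
        have hg' : Summable fun n => ‖a n * w ^ n‖ := by
          refine Summable.of_nonneg_of_le (fun n => norm_nonneg _) (fun n => ?_) ha_sum
          rw [norm_mul, norm_pow]
          exact mul_le_mul_of_nonneg_left (pow_le_pow_left₀ (norm_nonneg w) hw n)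
            (norm_nonneg _)
        have hcp := cauchyProductHasSum hbw haw hf' hg'
        rw [List.map_cons, List.prod_cons]
        convert hcp using 2 with n
        · rfl
        rw [Finset.sum_mul]
        refine Finset.sum_congr rfl fun kl hkl => ?_
        rw [← Finset.HasAntidiagonal.mem_antidiagonal.1 hkl, pow_add]
        ring
      · -- the algebra statement
        have hbA : HasSum (fun n => b n • (A - algebraMap ℂ 𝒜 z₀) ^ n)
            ((A - algebraMap ℂ 𝒜 p.1) * Ring.inverse (A - algebraMap ℂ 𝒜 p.2)) :=
          factor_hasSum A z₀ p.1 p.2 ρ' hA (hlt.trans hp)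
        have hBn : ∀ n : ℕ, ‖(A - algebraMap ℂ 𝒜 z₀) ^ n‖ ≤ ρ ^ n :=
          pow_norm_le _ (hA.trans hlt.le)
        have hf' : Summable fun n => ‖b n • (A - algebraMap ℂ 𝒜 z₀) ^ n‖ := by
          refine Summable.of_nonneg_of_le (fun n => norm_nonneg _) (fun n => ?_) hb_sum
          rw [norm_smul]
          exact mul_le_mul_of_nonneg_left (hBn n) (norm_nonneg _)
        have hg' : Summable fun n => ‖a n • (A - algebraMap ℂ 𝒜 z₀) ^ n‖ := by
          refine Summable.of_nonneg_of_le (fun n => norm_nonneg _) (fun n => ?_) ha_sum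
          rw [norm_smul]
          exact mul_le_mul_of_nonneg_left (hBn n) (norm_nonneg _)
        have hcp := cauchyProductHasSum hbA ha_A hf' hg'
        rw [List.map_cons, List.prod_cons]
        convert hcp using 2 with n
        rw [Finset.sum_smul]
        refine Finset.sum_congr rfl fun kl hkl => ?_
        rw [← Finset.HasAntidiagonal.mem_antidiagonal.1 hkl, pow_add, mul_smul,
          smul_mul_assoc, mul_smul_comm]



/-- Norm bound for a rational function of a Banach algebra element: if
`‖A - z₀·1‖ ≤ ρ' < ρ` and all poles `β j` lie strictly outside the closed disc
of radius `ρ` around `z₀`, then each `A - β j·1` is invertible and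
`‖∏ⱼ (A - αⱼ·1)(A - βⱼ·1)⁻¹‖ ≤ (ρ/(ρ-ρ')) · sup_{|z-z₀|≤ρ} ∏ⱼ |z-αⱼ|/|z-βⱼ|`. -/
theorem stmt_8 {𝒜 : Type*} [NormedRing 𝒜] [NormedAlgebra ℂ 𝒜] [CompleteSpace 𝒜]
    [NormOneClass 𝒜] (A : 𝒜) (z₀ : ℂ) (ρ ρ' : ℝ) (h0 : 0 ≤ ρ') (hlt : ρ' < ρ)
    (hA : ‖A - algebraMap ℂ 𝒜 z₀‖ ≤ ρ') (k : ℕ) (α β : Fin k → ℂ)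
    (hβ : ∀ j, ρ < ‖β j - z₀‖) :
    (∀ j, IsUnit (A - algebraMap ℂ 𝒜 (β j))) ∧
    ‖(List.ofFn fun j : Fin k =>
        (A - algebraMap ℂ 𝒜 (α j)) * Ring.inverse (A - algebraMap ℂ 𝒜 (β j))).prod‖ ≤
      ρ / (ρ - ρ') * ⨆ z : Metric.closedBall z₀ ρ,
        ∏ j : Fin k, ‖(z : ℂ) - α j‖ / ‖(z : ℂ) - β j‖ := by
  have hρ : (0 : ℝ) < ρ := lt_of_le_of_lt h0 hlt
  have hunit : ∀ j, IsUnit (A - algebraMap ℂ 𝒜 (β j)) := by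
    intro j
    have h := (resolvent_aux (A - algebraMap ℂ 𝒜 z₀) (β j - z₀)
      (lt_of_le_of_lt hA (hlt.trans (hβ j)))).1
    rwa [sub_algebraMap_sub] at h
  refine ⟨hunit, ?_⟩
  obtain ⟨a, ha_sum, ha_fun, ha_A⟩ := main_ind A z₀ ρ ρ' h0 hlt hA
      (List.ofFn fun j => (α j, β j)) (by
        intro p hp
        rw [List.mem_ofFn] at hp
        obtain ⟨j, rfl⟩ := hp
        exact hβ j)
  have hlist : (List.ofFn fun j : Fin k =>
      (A - algebraMap ℂ 𝒜 (α j)) * Ring.inverse (A - algebraMap ℂ 𝒜 (β j)))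
      = (List.ofFn fun j => ((α j, β j) : ℂ × ℂ)).map fun p =>
          (A - algebraMap ℂ 𝒜 p.1) * Ring.inverse (A - algebraMap ℂ 𝒜 p.2) := by
    rw [List.map_ofFn]; rfl
  set r : ℂ → ℂ := fun z => ∏ j, (z - α j) / (z - β j) with hr
  have hfun' : ∀ w : ℂ, ‖w‖ ≤ ρ →
      HasSum (fun n => a n * w ^ n) (r (z₀ + w)) := by
    intro w hw
    have h := ha_fun w hw
    rw [List.map_ofFn, List.prod_ofFn] at h
    exact h
  have hz_ne : ∀ z ∈ Metric.closedBall z₀ ρ, ∀ j, z - β j ≠ 0 := by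
    intro z hz j h
    have hzβ : z = β j := sub_eq_zero.1 h
    rw [Metric.mem_closedBall, hzβ, Complex.dist_eq] at hz
    exact absurd (lt_of_lt_of_le (hβ j) hz) (lt_irrefl _)
  have hdiffAt : ∀ z ∈ Metric.closedBall z₀ ρ, DifferentiableAt ℂ r z := by
    intro z hz
    apply DifferentiableAt.fun_finsetProd
    intro j _
    exact (differentiableAt_id.sub (differentiableAt_const _)).div
      (differentiableAt_id.sub (differentiableAt_const _)) (hz_ne z hz j)
  have hdiff : DifferentiableOn ℂ r (Metric.closedBall z₀ ρ) :=
    fun z hz => (hdiffAt z hz).differentiableWithinAt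
  have habsr : ∀ z : ℂ, ‖r z‖
      = ∏ j, ‖z - α j‖ / ‖z - β j‖ := by
    intro z
    rw [hr]
    rw [norm_prod]
    exact Finset.prod_congr rfl fun j _ => norm_div _ _
  set C : ℝ := ⨆ z : Metric.closedBall z₀ ρ,
      ∏ j : Fin k, ‖(z : ℂ) - α j‖ / ‖(z : ℂ) - β j‖ with hC
  have hbdd : BddAbove (Set.range fun z : Metric.closedBall z₀ ρ =>
      ∏ j : Fin k, ‖(z : ℂ) - α j‖ / ‖(z : ℂ) - β j‖) := by
    have himg : BddAbove ((fun z => ∏ j : Fin k,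
        ‖z - α j‖ / ‖z - β j‖) '' Metric.closedBall z₀ ρ) := by
      apply (isCompact_closedBall z₀ ρ).bddAbove_image
      refine ContinuousOn.congr (continuous_norm.comp_continuousOn hdiff.continuousOn) ?_
      intro z _
      exact (habsr z).symm
    obtain ⟨M, hM⟩ := himg
    refine ⟨M, ?_⟩
    rintro y ⟨z, rfl⟩
    exact hM (Set.mem_image_of_mem _ z.2)
  have hle : ∀ z ∈ Metric.closedBall z₀ ρ, ‖r z‖ ≤ C := by
    intro z hz
    rw [habsr z]
    exact le_ciSup hbdd ⟨z, hz⟩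
  have hC0 : 0 ≤ C := by
    refine le_trans ?_ (hle z₀ (Metric.mem_closedBall_self hρ.le))
    positivity
  -- the power series given by `a`
  set Rn : NNReal := ρ.toNNReal with hRn
  have hRnρ : (Rn : ℝ) = ρ := Real.coe_toNNReal ρ hρ.le
  have hRpos : 0 < Rn := Real.toNNReal_pos.2 hρ
  set pa : FormalMultilinearSeries ℂ ℂ ℂ :=
    fun n => ContinuousMultilinearMap.mkPiRing ℂ (Fin n) (a n) with hpa_def
  have hpa_norm : ∀ n, ‖pa n‖ = ‖a n‖ := by
    intro n
    exact ContinuousMultilinearMap.norm_mkPiRing (a n)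
  have hpa_rad : (Rn : ENNReal) ≤ pa.radius := by
    apply pa.le_radius_of_summable_norm
    refine ha_sum.congr fun n => ?_
    rw [hpa_norm n, hRnρ]
  have hpa : HasFPowerSeriesOnBall r pa z₀ Rn := by
    refine ⟨hpa_rad, by exact_mod_cast hRpos, ?_⟩
    intro y hy
    have hy' : ‖y‖ < ρ := by
      rw [mem_emetric_ball_zero_iff] at hy
      have := ENNReal.coe_lt_coe.1 hy
      rw [← hRnρ]
      exact_mod_cast this
    have hsum := hfun' y hy'.le
    have : (fun n => pa n fun _ => y) = fun n => a n * y ^ n := by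
      funext n
      rw [hpa_def]
      simp [ContinuousMultilinearMap.mkPiRing_apply, smul_eq_mul, mul_comm]
    rw [this]
    exact hsum
  have hdon : DifferentiableOn ℂ r (Metric.closedBall z₀ (Rn : ℝ)) := by
    rw [hRnρ]; exact hdiff
  have hq : HasFPowerSeriesOnBall r (cauchyPowerSeries r z₀ Rn) z₀ Rn :=
    hdon.hasFPowerSeriesOnBall hRpos
  have hpq : pa = cauchyPowerSeries r z₀ (Rn : ℝ) :=
    hpa.hasFPowerSeriesAt.eq_formalMultilinearSeries hq.hasFPowerSeriesAt
  -- Cauchy estimate for the coefficients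
  have hcont_circ : Continuous fun θ : ℝ => ‖r (circleMap z₀ ρ θ)‖ := by
    apply Continuous.norm
    refine continuous_iff_continuousAt.2 fun θ => ?_
    exact ((hdiffAt _ (Metric.sphere_subset_closedBall
      (circleMap_mem_sphere z₀ hρ.le θ))).continuousAt).comp
      (continuous_circleMap z₀ ρ).continuousAt
  have hint : (∫ θ in (0:ℝ)..2 * Real.pi, ‖r (circleMap z₀ ρ θ)‖) ≤ 2 * Real.pi * C := by
    have h2 := intervalIntegral.integral_mono_on (a := (0:ℝ)) (b := 2 * Real.pi)
      (f := fun θ => ‖r (circleMap z₀ ρ θ)‖) (g := fun _ => C)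
      (μ := MeasureTheory.volume)
      (by positivity) (hcont_circ.intervalIntegrable _ _) intervalIntegrable_const
      (fun θ _ => by
        simpa using
          hle _ (Metric.sphere_subset_closedBall (circleMap_mem_sphere z₀ hρ.le θ)))
    simpa [mul_comm C] using h2
  have hcoef : ∀ n, ‖a n‖ * ρ ^ n ≤ C := by
    intro n
    have h1 := norm_cauchyPowerSeries_le r z₀ (Rn : ℝ) n
    rw [← hpq, hpa_norm n, hRnρ] at h1
    have h2 : ((2 * Real.pi)⁻¹ * ∫ θ : ℝ in (0)..2 * Real.pi, ‖r (circleMap z₀ ρ θ)‖)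
        * |ρ|⁻¹ ^ n ≤ ((2 * Real.pi)⁻¹ * (2 * Real.pi * C)) * |ρ|⁻¹ ^ n :=
      mul_le_mul_of_nonneg_right
        (mul_le_mul_of_nonneg_left hint (by positivity : (0:ℝ) ≤ (2 * Real.pi)⁻¹))
        (by positivity : (0:ℝ) ≤ |ρ|⁻¹ ^ n)
    have h3 : (2 * Real.pi)⁻¹ * (2 * Real.pi * C) = C := by
      rw [← mul_assoc, inv_mul_cancel₀ (by positivity : (2 * Real.pi : ℝ) ≠ 0), one_mul]
    rw [h3] at h2
    have h4 : ‖a n‖ ≤ C * |ρ|⁻¹ ^ n := le_trans h1 h2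
    have h5 : ‖a n‖ * ρ ^ n ≤ C * |ρ|⁻¹ ^ n * ρ ^ n :=
      mul_le_mul_of_nonneg_right h4 (by positivity)
    refine h5.trans (le_of_eq ?_)
    rw [abs_of_pos hρ, mul_assoc, ← mul_pow, inv_mul_cancel₀ hρ.ne', one_pow, mul_one]
  -- final geometric series estimate
  have hBnorm : ∀ n, ‖a n • (A - algebraMap ℂ 𝒜 z₀) ^ n‖ ≤ C * (ρ' / ρ) ^ n := by
    intro n
    rw [norm_smul]
    calc ‖a n‖ * ‖(A - algebraMap ℂ 𝒜 z₀) ^ n‖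
        ≤ ‖a n‖ * ρ' ^ n :=
          mul_le_mul_of_nonneg_left (pow_norm_le _ hA n) (norm_nonneg _)
      _ = (‖a n‖ * ρ ^ n) * (ρ' / ρ) ^ n := by
          have key : ρ ^ n * (ρ' / ρ) ^ n = ρ' ^ n := by
            rw [div_pow, mul_comm, div_mul_cancel₀ _ (pow_ne_zero n hρ.ne')]
          rw [mul_assoc, key]
      _ ≤ C * (ρ' / ρ) ^ n := mul_le_mul_of_nonneg_right (hcoef n) (by positivity)
  have hratio : ρ' / ρ < 1 := (div_lt_one hρ).2 hlt
  have hratio0 : 0 ≤ ρ' / ρ := by positivity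
  have hgeom : Summable fun n : ℕ => C * (ρ' / ρ) ^ n :=
    (summable_geometric_of_lt_one hratio0 hratio).mul_left C
  have hsummable : Summable fun n => ‖a n • (A - algebraMap ℂ 𝒜 z₀) ^ n‖ :=
    Summable.of_nonneg_of_le (fun n => norm_nonneg _) hBnorm hgeom
  rw [hlist, ← ha_A.tsum_eq]
  calc ‖∑' n, a n • (A - algebraMap ℂ 𝒜 z₀) ^ n‖
      ≤ ∑' n, ‖a n • (A - algebraMap ℂ 𝒜 z₀) ^ n‖ := norm_tsum_le_tsum_norm hsummable
    _ ≤ ∑' n : ℕ, C * (ρ' / ρ) ^ n := Summable.tsum_le_tsum hBnorm hsummable hgeom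
    _ = C * (1 - ρ' / ρ)⁻¹ := by
        rw [tsum_mul_left, tsum_geometric_of_lt_one hratio0 hratio]
    _ = ρ / (ρ - ρ') * C := by
        rw [one_sub_div hρ.ne', inv_div, mul_comm]
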